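/- arXiv:1804.00840 — 6 statements merged into one kernel-verified Lean document; each statement's English description precedes it below -/
import Mathlib

section
/- Let p > 0 and let aₙ, λₙ > 0 for n ≥ 1, with Λₙ = λ₁+⋯+λₙ and Aₙ = λ₁a₁+⋯+λₙaₙ. Then for every N ≥ 1, ∑_{n=1}^N λₙ·(Aₙ/Λₙ)^(-p) - (p/(p+1))·∑_{n=1}^N λₙ·aₙ·(Aₙ/Λₙ)^(-p-1) ≥ (Λ_N/(p+1))·(A_N/Λ_N)^(-p). -/
open Real Finset

lemma key1 (p : ℝ) (hp : 0 < p) (t : ℝ) (ht : 0 < t) :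
    p + 1 ≤ t ^ (-p) + p * t := by
  have hp1 : 0 < p + 1 := by linarith
  have h := Real.geom_mean_le_arith_mean2_weighted
    (w₁ := 1/(p+1)) (w₂ := p/(p+1)) (p₁ := t ^ (-p)) (p₂ := t)
    (by positivity) (by positivity) (Real.rpow_nonneg ht.le _) ht.le
    (by field_simp; ring)
  have hgm : (t ^ (-p)) ^ (1/(p+1)) * t ^ (p/(p+1)) = 1 := by
    rw [← Real.rpow_mul ht.le, ← Real.rpow_add ht]
    rw [show -p * (1/(p+1)) + p/(p+1) = 0 by field_simp; ring]
    exact Real.rpow_zero t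
  rw [hgm] at h
  have := mul_le_mul_of_nonneg_left h hp1.le
  calc p + 1 = (p+1) * 1 := by ring
    _ ≤ (p+1) * (1/(p+1) * t ^ (-p) + p/(p+1) * t) := this
    _ = t ^ (-p) + p * t := by field_simp

lemma key2 (p : ℝ) (hp : 0 < p) (y₁ y₂ : ℝ) (h1 : 0 < y₁) (h2 : 0 < y₂) :
    (p + 1) * y₂ ^ (-p) ≤ y₁ ^ (-p) + p * y₁ * y₂ ^ (-p - 1) := by
  have ht : 0 < y₁ / y₂ := div_pos h1 h2
  have h := key1 p hp (y₁/y₂) ht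
  have h2p : (0:ℝ) < y₂ ^ (-p) := Real.rpow_pos_of_pos h2 _
  have hd : (y₁/y₂) ^ (-p) = y₁ ^ (-p) / y₂ ^ (-p) := Real.div_rpow h1.le h2.le _
  have hs : y₂ ^ (-p - 1) = y₂ ^ (-p) / y₂ := by
    rw [Real.rpow_sub h2, Real.rpow_one]
  have := mul_le_mul_of_nonneg_left h h2p.le
  calc (p+1) * y₂ ^ (-p) = y₂ ^ (-p) * (p + 1) := by ring
    _ ≤ y₂ ^ (-p) * ((y₁/y₂) ^ (-p) + p * (y₁/y₂)) := this
    _ = y₁ ^ (-p) + p * y₁ * y₂ ^ (-p - 1) := by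
        rw [hd, hs]; field_simp

theorem stmt3 (p : ℝ) (hp : 0 < p)
    (a l : ℕ → ℝ) (ha : ∀ n, 1 ≤ n → 0 < a n) (hl : ∀ n, 1 ≤ n → 0 < l n)
    (L A : ℕ → ℝ)
    (hL : ∀ n, L n = ∑ i ∈ Finset.Icc 1 n, l i)
    (hA : ∀ n, A n = ∑ i ∈ Finset.Icc 1 n, l i * a i)
    (N : ℕ) (hN : 1 ≤ N) :
    (∑ n ∈ Finset.Icc 1 N, l n * (A n / L n) ^ (-p))
      - (p / (p + 1)) * ∑ n ∈ Finset.Icc 1 N, l n * a n * (A n / L n) ^ (-p - 1)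
    ≥ (L N / (p + 1)) * (A N / L N) ^ (-p) := by
  have hp1 : (0:ℝ) < p + 1 := by linarith
  have hLpos : ∀ n, 1 ≤ n → 0 < L n := by
    intro n hn
    rw [hL]
    exact Finset.sum_pos (fun i hi => hl i (Finset.mem_Icc.1 hi).1)
      ⟨1, Finset.mem_Icc.2 ⟨le_refl 1, hn⟩⟩
  have hApos : ∀ n, 1 ≤ n → 0 < A n := by
    intro n hn
    rw [hA]
    exact Finset.sum_pos (fun i hi => mul_pos (hl i (Finset.mem_Icc.1 hi).1)
      (ha i (Finset.mem_Icc.1 hi).1)) ⟨1, Finset.mem_Icc.2 ⟨le_refl 1, hn⟩⟩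
  induction N, hN using Nat.le_induction with
  | base =>
    simp only [Finset.Icc_self, Finset.sum_singleton]
    have ha1 := ha 1 le_rfl
    have hl1 := hl 1 le_rfl
    have hA1 : A 1 = l 1 * a 1 := by rw [hA]; simp
    have hL1 : L 1 = l 1 := by rw [hL]; simp
    rw [hA1, hL1]
    have hx : l 1 * a 1 / l 1 = a 1 := by field_simp
    rw [hx]
    have hs : a 1 ^ (-p - 1) = a 1 ^ (-p) / a 1 := by
      rw [Real.rpow_sub ha1, Real.rpow_one]
    rw [hs]
    apply ge_of_eq
    field_simp
    ring
  | succ N hN IH =>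
    have hLN := hLpos N hN
    have hAN := hApos N hN
    have hLN1 := hLpos (N+1) (by omega)
    have hAN1 := hApos (N+1) (by omega)
    have hl' := hl (N+1) (by omega)
    have ha' := ha (N+1) (by omega)
    have hxN : 0 < A N / L N := div_pos hAN hLN
    have hx' : 0 < A (N+1) / L (N+1) := div_pos hAN1 hLN1
    have hLs : L (N+1) = L N + l (N+1) := by
      rw [hL, hL, Finset.sum_Icc_succ_top (by omega : 1 ≤ N+1)]
    have hAs : A (N+1) = A N + l (N+1) * a (N+1) := by
      rw [hA, hA, Finset.sum_Icc_succ_top (by omega : 1 ≤ N+1)]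
    rw [Finset.sum_Icc_succ_top (by omega : 1 ≤ N+1),
        Finset.sum_Icc_succ_top (by omega : 1 ≤ N+1)]
    -- key algebraic identity
    have hkey : A (N+1) * (A (N+1) / L (N+1)) ^ (-p - 1)
        = L (N+1) * (A (N+1) / L (N+1)) ^ (-p) := by
      rw [Real.rpow_sub hx', Real.rpow_one]
      rw [show A (N+1) * ((A (N+1) / L (N+1)) ^ (-p) / (A (N+1) / L (N+1)))
          = A (N+1) / (A (N+1) / L (N+1)) * (A (N+1) / L (N+1)) ^ (-p) by ring]
      congr 1
      rw [div_div_eq_mul_div, mul_comm, mul_div_assoc, div_self hAN1.ne', mul_one]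
    -- convexity step
    have h2 := key2 p hp (A N / L N) (A (N+1) / L (N+1)) hxN hx'
    have h3 := mul_le_mul_of_nonneg_left h2 (le_of_lt (div_pos hLN hp1))
    have hxA : L N * (A N / L N) = A N := by field_simp
    have h4 : L N * (A (N+1) / L (N+1)) ^ (-p)
        - (p/(p+1)) * (A N * (A (N+1) / L (N+1)) ^ (-p-1))
        ≤ (L N / (p+1)) * (A N / L N) ^ (-p) := by
      have e1 : L N / (p+1) * ((p+1) * (A (N+1) / L (N+1)) ^ (-p))
          = L N * (A (N+1) / L (N+1)) ^ (-p) := by field_simp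
      have e2 : L N / (p+1) * ((A N / L N) ^ (-p)
          + p * (A N / L N) * (A (N+1) / L (N+1)) ^ (-p-1))
          = (L N / (p+1)) * (A N / L N) ^ (-p)
            + (p/(p+1)) * (L N * (A N / L N) * (A (N+1) / L (N+1)) ^ (-p-1)) := by
        field_simp
      rw [e1, e2] at h3
      have hxv : (p/(p+1)) * (L N * (A N / L N) * (A (N+1) / L (N+1)) ^ (-p-1))
          = (p/(p+1)) * (A N * (A (N+1) / L (N+1)) ^ (-p-1)) := by rw [hxA]
      linarith
    -- combine
    have final : L N * (A (N+1) / L (N+1)) ^ (-p)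
        - (p/(p+1)) * (A N * (A (N+1) / L (N+1)) ^ (-p-1))
        + (l (N+1) * (A (N+1) / L (N+1)) ^ (-p)
          - (p/(p+1)) * (l (N+1) * a (N+1) * (A (N+1) / L (N+1)) ^ (-p-1)))
        = (L (N+1) / (p+1)) * (A (N+1) / L (N+1)) ^ (-p) := by
      rw [hLs, hAs] at hkey ⊢
      calc L N * ((A N + l (N+1) * a (N+1)) / (L N + l (N+1))) ^ (-p)
          - (p/(p+1)) * (A N * ((A N + l (N+1) * a (N+1)) / (L N + l (N+1))) ^ (-p-1))
          + (l (N+1) * ((A N + l (N+1) * a (N+1)) / (L N + l (N+1))) ^ (-p)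
            - (p/(p+1)) * (l (N+1) * a (N+1) * ((A N + l (N+1) * a (N+1)) / (L N + l (N+1))) ^ (-p-1)))
          = (L N + l (N+1)) * ((A N + l (N+1) * a (N+1)) / (L N + l (N+1))) ^ (-p)
            - (p/(p+1)) * ((A N + l (N+1) * a (N+1))
              * ((A N + l (N+1) * a (N+1)) / (L N + l (N+1))) ^ (-p-1)) := by ring
        _ = (L N + l (N+1)) * ((A N + l (N+1) * a (N+1)) / (L N + l (N+1))) ^ (-p)
            - (p/(p+1)) * ((L N + l (N+1))
              * ((A N + l (N+1) * a (N+1)) / (L N + l (N+1))) ^ (-p)) := by rw [hkey]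
        _ = ((L N + l (N+1)) / (p+1))
            * ((A N + l (N+1) * a (N+1)) / (L N + l (N+1))) ^ (-p) := by
              field_simp
              ring
    linarith [IH]
end

section
/- Let p ≥ q > 0 and let aₙ, λₙ > 0 for n ≥ 1, with Λₙ = λ₁+⋯+λₙ and Aₙ = λ₁a₁+⋯+λₙaₙ. Then for every N ≥ 1, ∑_{n=1}^N λₙ·(Aₙ/Λₙ)^(-p) ≤ ((p+1)/p)^q · ∑_{n=1}^N λₙ·(Aₙ/Λₙ)^(-p+q)·aₙ^(-q) − (q/(p+1))·Λ_N·(A_N/Λ_N)^(-p). -/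
lemma key_ineq (x r : ℝ) (hx : 0 < x) (hr : 0 < r) : 1 + r ≤ x ^ r + r / x := by
  have h := one_add_mul_self_le_rpow_one_add (s := x - 1) (by linarith) (p := r + 1) (by linarith)
  have hx1 : (1 + (x - 1)) ^ (r + 1) = x ^ r * x := by
    rw [show (1 : ℝ) + (x - 1) = x by ring, Real.rpow_add hx, Real.rpow_one]
  rw [hx1] at h
  have h2 : 0 ≤ (x ^ r * x - (1 + (r+1)*(x-1))) / x := by
    apply div_nonneg (by linarith) hx.le
  have h3 : x ^ r + r / x - (1 + r) = (x ^ r * x - (1 + (r+1)*(x-1))) / x := by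
    field_simp; ring
  linarith

lemma step_ineq (p q : ℝ) (hq : 0 < q) (hpq : q ≤ p)
    (lam c lΛ lA : ℝ) (hlam : 0 < lam) (hc : 0 < c) (hlΛ : 0 < lΛ) (hlA : 0 < lA) :
    lam * ((lA + lam*c)/(lΛ + lam)) ^ (-p) + q/(p+1) * (lΛ + lam) * ((lA + lam*c)/(lΛ + lam)) ^ (-p)
      ≤ q/(p+1) * lΛ * (lA/lΛ) ^ (-p)
        + ((p+1)/p) ^ q * lam * ((lA + lam*c)/(lΛ + lam)) ^ (-p+q) * c ^ (-q) := by
  have hp : 0 < p := lt_of_lt_of_le hq hpq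
  set α := (lA + lam*c)/(lΛ + lam) with hαdef
  set β := lA/lΛ with hβdef
  have hα : 0 < α := by apply div_pos (by nlinarith) (by linarith)
  have hβ : 0 < β := div_pos hlA hlΛ
  set P := α ^ (-p) with hPdef
  have hP : 0 < P := Real.rpow_pos_of_pos hα _
  -- convexity step
  have h2l : (1+p) - p*(β/α) ≤ (α/β) ^ p := by
    have h := key_ineq (α/β) p (div_pos hα hβ) hp
    have : p / (α/β) = p * (β/α) := by field_simp
    rw [this] at h; linarith
  have e2 : β ^ (-p) = P * (α/β) ^ p := by
    rw [hPdef, Real.div_rpow hα.le hβ.le, Real.rpow_neg hα.le]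
    have h1 : α ^ p ≠ 0 := (Real.rpow_pos_of_pos hα p).ne'
    have h2 : β ^ p ≠ 0 := (Real.rpow_pos_of_pos hβ p).ne'
    rw [Real.rpow_neg hβ.le]
    field_simp
  have hrel : lΛ * (β/α) = (lΛ + lam) - lam*(c/α) := by
    rw [hβdef, hαdef]
    have h1 : lA + lam*c ≠ 0 := by nlinarith
    field_simp
    ring
  have h2m : q/(p+1)*lΛ*P*((1+p) - p*(β/α)) ≤ q/(p+1)*lΛ*P*((α/β) ^ p) :=
    mul_le_mul_of_nonneg_left h2l (by positivity)
  have hA : q/(p+1)*P*((1+p)*lΛ - p*(lΛ+lam) + p*lam*(c/α)) ≤ q/(p+1) * lΛ * β ^ (-p) := by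
    have e3 : q/(p+1)*P*((1+p)*lΛ - p*(lΛ+lam) + p*lam*(c/α)) = q/(p+1)*lΛ*P*((1+p) - p*(β/α)) := by
      linear_combination (q/(p+1)*P*p) * hrel
    rw [e3, e2]
    linarith [h2m]
  -- Young step
  have h3 := key_ineq (((p+1)/p)*(α/c)) q (by positivity) hq
  have e4 : (((p+1)/p)*(α/c)) ^ q = ((p+1)/p) ^ q * (α/c) ^ q :=
    Real.mul_rpow (by positivity) (by positivity)
  have e5 : q/(((p+1)/p)*(α/c)) = q*p/(p+1)*(c/α) := by
    field_simp
  rw [e4, e5] at h3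
  have h3m : lam*P*(1 + q - q*p/(p+1)*(c/α)) ≤ lam*P*(((p+1)/p) ^ q * (α/c) ^ q) := by
    apply mul_le_mul_of_nonneg_left (by linarith) (by positivity)
  have e6 : α ^ (-p+q) = P * α ^ q := by rw [hPdef, ← Real.rpow_add hα]
  have e7 : (α/c) ^ q = α ^ q * c ^ (-q) := by
    rw [Real.div_rpow hα.le hc.le, Real.rpow_neg hc.le, div_eq_mul_inv]
  have eB : lam*P*(((p+1)/p) ^ q * (α/c) ^ q) = ((p+1)/p) ^ q * lam * α ^ (-p+q) * c ^ (-q) := by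
    rw [e6, e7]; ring
  have final : q/(p+1)*P*((1+p)*lΛ - p*(lΛ+lam) + p*lam*(c/α)) + lam*P*(1 + q - q*p/(p+1)*(c/α))
      = lam * P + q/(p+1) * (lΛ + lam) * P := by
    field_simp; ring
  linarith [hA, h3m, eB ▸ h3m]
theorem stmt4 (p q : ℝ) (hq : 0 < q) (hpq : q ≤ p)
    (a l : ℕ → ℝ) (ha : ∀ n, 1 ≤ n → 0 < a n) (hl : ∀ n, 1 ≤ n → 0 < l n)
    (L A : ℕ → ℝ)
    (hL : ∀ n, L n = ∑ i ∈ Finset.Icc 1 n, l i)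
    (hA : ∀ n, A n = ∑ i ∈ Finset.Icc 1 n, l i * a i)
    (N : ℕ) (hN : 1 ≤ N) :
    (∑ n ∈ Finset.Icc 1 N, l n * (A n / L n) ^ (-p))
      ≤ ((p + 1) / p) ^ q * (∑ n ∈ Finset.Icc 1 N, l n * (A n / L n) ^ (-p + q) * (a n) ^ (-q))
        - (q / (p + 1)) * L N * (A N / L N) ^ (-p) := by
  have hp : 0 < p := lt_of_lt_of_le hq hpq
  have hLpos : ∀ n, 1 ≤ n → 0 < L n := by
    intro n hn
    rw [hL]
    apply Finset.sum_pos (fun i hi => hl i (Finset.mem_Icc.mp hi).1)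
    exact ⟨1, Finset.mem_Icc.mpr ⟨le_refl 1, hn⟩⟩
  have hApos : ∀ n, 1 ≤ n → 0 < A n := by
    intro n hn
    rw [hA]
    apply Finset.sum_pos (fun i hi => mul_pos (hl i (Finset.mem_Icc.mp hi).1) (ha i (Finset.mem_Icc.mp hi).1))
    exact ⟨1, Finset.mem_Icc.mpr ⟨le_refl 1, hn⟩⟩
  induction N, hN using Nat.le_induction with
  | base =>
    rw [show Finset.Icc 1 1 = {1} from Finset.Icc_self 1]
    simp only [Finset.sum_singleton]
    have hL1 : L 1 = l 1 := by rw [hL, Finset.Icc_self, Finset.sum_singleton]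
    have hA1 : A 1 = l 1 * a 1 := by rw [hA, Finset.Icc_self, Finset.sum_singleton]
    have ha1 := ha 1 le_rfl
    have hl1 := hl 1 le_rfl
    have hq1 : A 1 / L 1 = a 1 := by rw [hL1, hA1]; field_simp
    rw [hq1, hL1]
    have e1 : (a 1) ^ (-p+q) * (a 1) ^ (-q) = (a 1) ^ (-p) := by
      rw [← Real.rpow_add ha1]; ring_nf
    have hC : 1 + q/(p+1) ≤ ((p+1)/p) ^ q := by
      have h := key_ineq ((p+1)/p) q (by positivity) hq
      have e : q / ((p+1)/p) = q*p/(p+1) := by field_simp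
      rw [e] at h
      have : 1 + q/(p+1) = 1 + q - q*p/(p+1) := by field_simp; ring
      linarith
    have hpos : 0 < l 1 * (a 1) ^ (-p) := by positivity
    have := mul_le_mul_of_nonneg_right hC hpos.le
    calc l 1 * a 1 ^ (-p)
        ≤ ((p+1)/p) ^ q * (l 1 * (a 1) ^ (-p)) - q/(p+1) * (l 1 * (a 1) ^ (-p)) := by nlinarith
      _ = ((p+1)/p) ^ q * (l 1 * a 1 ^ (-p+q) * a 1 ^ (-q)) - q/(p+1) * l 1 * a 1 ^ (-p) := by
          rw [mul_assoc (l 1), e1]; ring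
  | succ n hn ih =>
    have hsum1 : ∑ m ∈ Finset.Icc 1 (n+1), l m * (A m / L m) ^ (-p)
        = (∑ m ∈ Finset.Icc 1 n, l m * (A m / L m) ^ (-p)) + l (n+1) * (A (n+1) / L (n+1)) ^ (-p) := by
      rw [Finset.sum_Icc_succ_top (by omega)]
    have hsum2 : ∑ m ∈ Finset.Icc 1 (n+1), l m * (A m / L m) ^ (-p+q) * (a m) ^ (-q)
        = (∑ m ∈ Finset.Icc 1 n, l m * (A m / L m) ^ (-p+q) * (a m) ^ (-q))
          + l (n+1) * (A (n+1) / L (n+1)) ^ (-p+q) * (a (n+1)) ^ (-q) := by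
      rw [Finset.sum_Icc_succ_top (by omega)]
    have hLrec : L (n+1) = L n + l (n+1) := by
      rw [hL, hL, Finset.sum_Icc_succ_top (by omega)]
    have hArec : A (n+1) = A n + l (n+1) * a (n+1) := by
      rw [hA, hA, Finset.sum_Icc_succ_top (by omega)]
    have key := step_ineq p q hq hpq (l (n+1)) (a (n+1)) (L n) (A n)
      (hl (n+1) (by omega)) (ha (n+1) (by omega)) (hLpos n hn) (hApos n hn)
    rw [← hArec, ← hLrec] at key
    rw [hsum1, hsum2]
    have ihh := ih
    linarith [key, ihh]
end

section
/- Fix p > q > 0 and c > 0, and define G(x) = x − (x − c/(p+1))^(q/p) · x^(1−q/p) for x > c/(p+1). Then G is non-increasing on (c/(p+1), ∞). -/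
theorem stmt6 (p q c : ℝ) (hq : 0 < q) (hpq : q < p) (hc : 0 < c) :
    AntitoneOn (fun x : ℝ => x - (x - c / (p + 1)) ^ (q / p) * x ^ (1 - q / p))
      (Set.Ioi (c / (p + 1))) := by
  have hp : 0 < p := hq.trans hpq
  set a := c / (p + 1) with ha_def
  have ha : 0 < a := by positivity
  set t := q / p with ht_def
  have ht0 : 0 < t := by positivity
  have ht1 : t < 1 := (div_lt_one hp).mpr hpq
  intro x hx y hy hxy
  rcases eq_or_lt_of_le hxy with rfl | hlt
  · exact le_refl _
  simp only [Set.mem_Ioi] at hx hy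
  simp only
  have hA : (0:ℝ) < x - a := sub_pos.mpr hx
  have hB : (0:ℝ) < x := ha.trans hx
  have hC : (0:ℝ) < y - x := sub_pos.mpr hlt
  set A := x - a
  set B := x
  set C := y - x
  have hAC : 0 < A + C := by positivity
  have hBC : 0 < B + C := by positivity
  have hyA : y - a = A + C := by ring
  have hyB : y = B + C := by ring
  set S := (A + C) ^ t * (B + C) ^ (1 - t) with hS_def
  have hS : 0 < S := by positivity
  have key : A ^ t * B ^ (1 - t) + C ≤ S := by
    have h1 : (A/(A+C)) ^ t * (B/(B+C)) ^ (1-t) ≤ t * (A/(A+C)) + (1-t) * (B/(B+C)) :=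
      Real.geom_mean_le_arith_mean2_weighted ht0.le (by linarith) (by positivity)
        (by positivity) (by ring)
    have h2 : (C/(A+C)) ^ t * (C/(B+C)) ^ (1-t) ≤ t * (C/(A+C)) + (1-t) * (C/(B+C)) :=
      Real.geom_mean_le_arith_mean2_weighted ht0.le (by linarith) (by positivity)
        (by positivity) (by ring)
    have e1 : (A/(A+C)) ^ t * (B/(B+C)) ^ (1-t) * S = A ^ t * B ^ (1-t) := by
      rw [Real.div_rpow hA.le hAC.le, Real.div_rpow hB.le hBC.le, hS_def]
      have h3 : (A+C) ^ t ≠ 0 := by positivity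
      have h4 : (B+C) ^ (1-t) ≠ 0 := by positivity
      field_simp
    have e2 : (C/(A+C)) ^ t * (C/(B+C)) ^ (1-t) * S = C := by
      rw [Real.div_rpow hC.le hAC.le, Real.div_rpow hC.le hBC.le, hS_def]
      have h3 : (A+C) ^ t ≠ 0 := by positivity
      have h4 : (B+C) ^ (1-t) ≠ 0 := by positivity
      have h5 : C ^ t * C ^ (1-t) = C := by
        rw [← Real.rpow_add hC]; simp
      calc C ^ t / (A+C) ^ t * (C ^ (1-t) / (B+C) ^ (1-t)) * ((A+C) ^ t * (B+C) ^ (1-t))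
          = (C ^ t * C ^ (1-t)) * (((A+C) ^ t / (A+C) ^ t) * ((B+C) ^ (1-t) / (B+C) ^ (1-t))) := by
            ring
        _ = C := by rw [h5, div_self h3, div_self h4]; ring
    have hcoef : t * (A/(A+C)) + (1-t) * (B/(B+C)) + (t * (C/(A+C)) + (1-t) * (C/(B+C))) = 1 := by
      field_simp
      ring
    have m1 := mul_le_mul_of_nonneg_right h1 hS.le
    rw [e1] at m1
    have m2 := mul_le_mul_of_nonneg_right h2 hS.le
    rw [e2] at m2
    calc A ^ t * B ^ (1-t) + C
        ≤ (t * (A/(A+C)) + (1-t) * (B/(B+C))) * S + (t * (C/(A+C)) + (1-t) * (C/(B+C))) * S :=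
          add_le_add m1 m2
      _ = (t * (A/(A+C)) + (1-t) * (B/(B+C)) + (t * (C/(A+C)) + (1-t) * (C/(B+C)))) * S := by ring
      _ = S := by rw [hcoef, one_mul]
  rw [hyA, hyB]
  linarith
end

section
/- Fix p > q > 0 and c > 0, and define G(x) = x − (x − c/(p+1))^(q/p) · x^(1−q/p) for x > c/(p+1). Then lim_{x→∞} G(x) = q·c/(p·(p+1)), and consequently G(x) ≥ q·c/(p·(p+1)) for all x > c/(p+1). -/
theorem stmt7 (p q c : ℝ) (hq : 0 < q) (hpq : q < p) (hc : 0 < c) :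
    Filter.Tendsto (fun x : ℝ => x - (x - c / (p + 1)) ^ (q / p) * x ^ (1 - q / p))
      Filter.atTop (nhds (q * c / (p * (p + 1)))) ∧
    ∀ x : ℝ, c / (p + 1) < x →
      x - (x - c / (p + 1)) ^ (q / p) * x ^ (1 - q / p) ≥ q * c / (p * (p + 1)) := by
  have hp0 : 0 < p := hq.trans hpq
  set a := c / (p + 1) with ha
  have ha0 : 0 < a := div_pos hc (by linarith)
  set t := q / p with ht
  have ht0 : 0 < t := div_pos hq hp0
  have ht1 : t < 1 := (div_lt_one hp0).mpr hpq
  have hta : t * a = q * c / (p * (p + 1)) := by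
    rw [ht, ha]; field_simp
  constructor
  · -- the limit
    have h1 : HasDerivAt (fun u : ℝ => 1 - u) (-1) 0 := by
      simpa using (hasDerivAt_id (0 : ℝ)).const_sub 1
    have h2 : HasDerivAt (fun y : ℝ => y ^ t) (t * (1 : ℝ) ^ (t - 1)) 1 :=
      Real.hasDerivAt_rpow_const (Or.inl one_ne_zero)
    have h2' : HasDerivAt (fun y : ℝ => y ^ t) (t * (1 : ℝ) ^ (t - 1)) ((fun u : ℝ => 1 - u) 0) := by
      simpa using h2
    have hderiv : HasDerivAt (fun u : ℝ => (1 - u) ^ t) (-t) 0 := by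
      have := h2'.comp 0 h1
      simpa [Real.one_rpow, Function.comp_def] using this
    have hslope : Filter.Tendsto (slope (fun u : ℝ => (1 - u) ^ t) 0)
        (nhdsWithin 0 {(0 : ℝ)}ᶜ) (nhds (-t)) :=
      hasDerivAt_iff_tendsto_slope.mp hderiv
    have hu0 : Filter.Tendsto (fun x : ℝ => a / x) Filter.atTop (nhds 0) := by
      simpa using Filter.Tendsto.div_atTop (tendsto_const_nhds (x := a)) Filter.tendsto_id
    have hu : Filter.Tendsto (fun x : ℝ => a / x) Filter.atTop
        (nhdsWithin 0 {(0 : ℝ)}ᶜ) := by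
      apply tendsto_nhdsWithin_of_tendsto_nhds_of_eventually_within _ hu0
      filter_upwards [Filter.eventually_gt_atTop 0] with x hx
      exact (div_pos ha0 hx).ne'
    have hcomp : Filter.Tendsto
        (fun x : ℝ => -a * slope (fun u : ℝ => (1 - u) ^ t) 0 (a / x))
        Filter.atTop (nhds (-a * -t)) :=
      (hslope.comp hu).const_mul (-a)
    have heq : ∀ᶠ x : ℝ in Filter.atTop,
        -a * slope (fun u : ℝ => (1 - u) ^ t) 0 (a / x)
          = x - (x - a) ^ t * x ^ (1 - t) := by
      filter_upwards [Filter.eventually_gt_atTop a, Filter.eventually_gt_atTop 0]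
        with x hxa hx0
      have hu0' : a / x ≠ 0 := (div_pos ha0 hx0).ne'
      have h1 : (1 : ℝ) - a / x = (x - a) / x := by field_simp
      have h2 : ((x - a) / x) ^ t = (x - a) ^ t / x ^ t :=
        Real.div_rpow (by linarith : (0:ℝ) ≤ x - a) hx0.le t
      have h3 : x ^ (1 - t) = x / x ^ t := by
        rw [Real.rpow_sub hx0, Real.rpow_one]
      rw [slope_def_field, sub_zero, h1, h2]
      simp only [Real.one_rpow]
      have hxt : (0 : ℝ) < x ^ t := Real.rpow_pos_of_pos hx0 t
      rw [h3]
      field_simp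
      rw [mul_zero, sub_zero, mul_div_cancel_left₀ _ ha0.ne']
      ring
    have : -a * -t = q * c / (p * (p + 1)) := by rw [← hta]; ring
    rw [← this]
    exact hcomp.congr' heq
  · intro x hx
    have hx0 : 0 < x := ha0.trans hx
    have hgm : (x - a) ^ t * x ^ (1 - t) ≤ t * (x - a) + (1 - t) * x :=
      Real.geom_mean_le_arith_mean2_weighted ht0.le (by linarith) (by linarith) hx0.le
        (by ring)
    have : t * (x - a) + (1 - t) * x = x - t * a := by ring
    rw [this] at hgm
    rw [← hta]
    linarith
end

section
/- Let p ≥ q > 0 and let f : [a,b] → (0,∞) be continuous with (1/(b−a))·∫_a^b f = ℓ. Then ∫_a^b ((1/(t−a))·∫_a^t f(u) du)^(-p) dt ≤ ((p+1)/p)^q · ∫_a^b ((1/(t−a))·∫_a^t f(u) du)^(-p+q) · f(t)^(-q) dt − (q/(p+1))·(b−a)·ℓ^(-p). -/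
open Real

lemma key_ineq_s9 {p q x y : ℝ} (hp : 0 < p) (hq : 0 < q) (hx : 0 < x) (hy : 0 < y) :
    (q + 1) * x ^ (-p) - q * (p / (p + 1) * (x ^ (-p - 1) * y))
      ≤ ((p + 1) / p) ^ q * (x ^ (-p + q) * y ^ (-q)) := by
  have hp1 : 0 < p + 1 := by linarith
  set s : ℝ := p / (p + 1) * y / x with hs
  have hspos : 0 < s := by positivity
  have hbern : (q + 1) - q * s ≤ s ^ (-q) := by
    have hw : (1 : ℝ)/(q+1) + q/(q+1) = 1 := by
      rw [← add_div, add_comm]; exact div_self (by linarith)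
    have hgm := Real.geom_mean_le_arith_mean2_weighted
      (by positivity : (0:ℝ) ≤ 1/(q+1)) (by positivity : (0:ℝ) ≤ q/(q+1))
      (Real.rpow_nonneg hspos.le (-q)) hspos.le hw
    have h1 : (s ^ (-q)) ^ ((1:ℝ)/(q+1)) * s ^ (q/(q+1)) = 1 := by
      rw [← Real.rpow_mul hspos.le, ← Real.rpow_add hspos,
        show -q * (1/(q+1)) + q/(q+1) = 0 by field_simp; ring, Real.rpow_zero]
    rw [h1] at hgm
    have h2 : q + 1 ≤ s ^ (-q) + q * s := by
      have h3 := mul_le_mul_of_nonneg_left hgm (by linarith : (0:ℝ) ≤ q + 1)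
      rw [mul_one, mul_add] at h3
      calc q + 1 ≤ (q+1) * (1/(q+1) * s ^ (-q)) + (q+1) * (q/(q+1) * s) := h3
        _ = s ^ (-q) + q * s := by field_simp
    linarith
  have hxp : (0:ℝ) < x ^ (-p) := Real.rpow_pos_of_pos hx _
  have hmul := mul_le_mul_of_nonneg_left hbern hxp.le
  have e1 : x ^ (-p) * s = p / (p + 1) * (x ^ (-p - 1) * y) := by
    rw [hs, show -p - 1 = -p + (-1) by ring, Real.rpow_add hx, Real.rpow_neg_one]
    ring
  have e2 : x ^ (-p) * s ^ (-q) = ((p + 1) / p) ^ q * (x ^ (-p + q) * y ^ (-q)) := by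
    have hsq : s ^ (-q) = ((p + 1) / p) ^ q * y ^ (-q) * x ^ q := by
      rw [hs, div_eq_mul_inv, Real.mul_rpow (by positivity) (by positivity),
        Real.mul_rpow (by positivity) hy.le, Real.inv_rpow hx.le, ← Real.rpow_neg hx.le,
        neg_neg, Real.rpow_neg (by positivity : (0:ℝ) ≤ p/(p+1)),
        ← Real.inv_rpow (by positivity), inv_div]
    have hxx : x ^ (-p + q) = x ^ (-p) * x ^ q := Real.rpow_add hx _ _
    rw [hsq, hxx]; ring
  calc (q + 1) * x ^ (-p) - q * (p / (p + 1) * (x ^ (-p - 1) * y))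
      = x ^ (-p) * ((q + 1) - q * s) := by linear_combination q * e1
    _ ≤ x ^ (-p) * s ^ (-q) := hmul
    _ = _ := e2

open intervalIntegral MeasureTheory Set Filter Topology

lemma rpow_aux {c d : ℝ} (hc : 0 < c) (hd : 0 ≤ d) (e : ℝ) :
    (c⁻¹ * d) ^ e = c ^ (-e) * d ^ e := by
  rw [Real.mul_rpow (by positivity) hd, Real.inv_rpow hc.le, ← Real.rpow_neg hc.le]

theorem stmt9 (p q ℓ a b : ℝ) (hq : 0 < q) (hpq : q ≤ p) (hab : a < b)
    (f : ℝ → ℝ) (hf : ContinuousOn f (Set.Icc a b))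
    (hfpos : ∀ t ∈ Set.Icc a b, 0 < f t)
    (hℓ : (b - a)⁻¹ * ∫ u in a..b, f u = ℓ) :
    (∫ t in a..b, ((t - a)⁻¹ * ∫ u in a..t, f u) ^ (-p))
      ≤ ((p + 1) / p) ^ q *
          (∫ t in a..b, ((t - a)⁻¹ * ∫ u in a..t, f u) ^ (-p + q) * (f t) ^ (-q))
        - (q / (p + 1)) * (b - a) * ℓ ^ (-p) := by
  have hp : 0 < p := lt_of_lt_of_le hq hpq
  have hp1 : 0 < p + 1 := by linarith
  set F : ℝ → ℝ := fun t => ∫ u in a..t, f u with hF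
  have hfint : ∀ t ∈ Icc a b, IntervalIntegrable f volume a t := fun t ht =>
    (hf.mono (by rw [uIcc_of_le ht.1]; exact Icc_subset_Icc le_rfl ht.2)).intervalIntegrable
  have hFcont : ContinuousOn F (Icc a b) := by
    rw [show Icc a b = uIcc a b from (uIcc_of_le hab.le).symm]
    exact intervalIntegral.continuousOn_primitive_interval
      (by rw [uIcc_of_le hab.le]; exact hf.integrableOn_compact isCompact_Icc)
  have hFpos : ∀ t ∈ Ioc a b, 0 < F t := fun t ht =>
    intervalIntegral_pos_of_pos_on (hfint t ⟨ht.1.le, ht.2⟩)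
      (fun x hx => hfpos x ⟨hx.1.le, hx.2.le.trans ht.2⟩) ht.1
  -- slope limit at a
  have hslope : HasDerivWithinAt F (f a) (Set.Ici a) a := by
    apply intervalIntegral.integral_hasDerivWithinAt_right (t := Set.Ioi a)
      ((hfint a ⟨le_rfl, hab.le⟩))
    · exact ⟨Icc a b, Icc_mem_nhdsGT_of_mem ⟨le_rfl, hab⟩,
        hf.aestronglyMeasurable measurableSet_Icc⟩
    · exact (hf a ⟨le_rfl, hab.le⟩).mono_of_mem_nhdsWithin
        (Icc_mem_nhdsGT_of_mem ⟨le_rfl, hab⟩)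
  have hFa : F a = 0 := integral_same
  have hAtend : Tendsto (fun t => (t - a)⁻¹ * F t) (𝓝[>] a) (𝓝 (f a)) := by
    have := hasDerivWithinAt_iff_tendsto_slope.mp hslope
    rw [Set.Ici_sdiff_left] at this
    refine this.congr fun t => ?_
    rw [slope_def_field, hFa, sub_zero, div_eq_inv_mul]
  -- the continuous extension of the average function
  set A : ℝ → ℝ := fun t => if t = a then f a else (t - a)⁻¹ * F t with hA
  have hAeq : ∀ t, t ≠ a → A t = (t - a)⁻¹ * F t := fun t ht => if_neg ht
  have hApos : ∀ t ∈ Icc a b, 0 < A t := by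
    intro t ht
    rcases eq_or_ne t a with rfl | h
    · simpa [hA] using hfpos t ht
    · rw [hAeq t h]
      have h1 : a < t := lt_of_le_of_ne ht.1 (Ne.symm h)
      have h3 := hFpos t ⟨h1, ht.2⟩
      have h2 : 0 < t - a := sub_pos.2 h1
      positivity
  have hAcont : ContinuousOn A (Icc a b) := by
    intro t ht
    rcases eq_or_ne t a with rfl | h
    · rw [← continuousWithinAt_diff_self]
      have hsub : Icc t b \ {t} ⊆ Ioi t := fun x hx => lt_of_le_of_ne hx.1.1 (Ne.symm hx.2)
      have htend : Tendsto A (𝓝[Icc t b \ {t}] t) (𝓝 (f t)) := by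
        refine (hAtend.mono_left (nhdsWithin_mono _ hsub)).congr' ?_
        filter_upwards [self_mem_nhdsWithin] with x hx
        exact (hAeq x (hsub hx).ne').symm
      have : A t = f t := if_pos rfl
      rw [ContinuousWithinAt, this]
      exact htend
    · have h1 : a < t := lt_of_le_of_ne ht.1 (Ne.symm h)
      have hc : ContinuousWithinAt (fun s => (s - a)⁻¹ * F s) (Icc a b) t := by
        refine ContinuousWithinAt.mul ?_ (hFcont t ht)
        exact (((continuous_id.sub continuous_const).continuousAt).inv₀
          (sub_ne_zero.2 h)).continuousWithinAt
      refine hc.congr_of_eventuallyEq ?_ (hAeq t h)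
      have hmem : {x : ℝ | x ≠ a} ∈ 𝓝[Icc a b] t :=
        mem_nhdsWithin_of_mem_nhds (isOpen_ne.mem_nhds h)
      filter_upwards [hmem] with x hx
      exact hAeq x hx
  have hAb : A b = ℓ := by rw [hAeq b hab.ne']; exact hℓ
  -- the auxiliary function G and its derivative
  set G : ℝ → ℝ := fun t => (t - a) * A t ^ (-p) with hG
  set g' : ℝ → ℝ := fun t => (p+1) * A t ^ (-p) - p * (A t ^ (-p-1) * f t) with hg'
  have hGA : ∀ s ∈ Ioc a b, G s = (s - a) ^ (p+1) * F s ^ (-p) := by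
    intro s hs
    have h1 : 0 < s - a := sub_pos.2 hs.1
    have h2 : (s - a) * (s - a) ^ p = (s - a) ^ (p+1) := by
      rw [Real.rpow_add_one h1.ne', mul_comm]
    simp only [hG]
    rw [hAeq s hs.1.ne', rpow_aux h1 (hFpos s hs).le, neg_neg, ← mul_assoc, h2]
  have hGderiv : ∀ t ∈ Ioo a b, HasDerivAt G (g' t) t := by
    intro t ht
    have h1 : 0 < t - a := sub_pos.2 ht.1
    have hFt : 0 < F t := hFpos t ⟨ht.1, ht.2.le⟩
    have hmemIcc : Icc a b ∈ 𝓝 t := Icc_mem_nhds ht.1 ht.2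
    have hFderiv : HasDerivAt F (f t) t :=
      intervalIntegral.integral_hasDerivAt_right (hfint t ⟨ht.1.le, ht.2.le⟩)
        ⟨Icc a b, hmemIcc, hf.aestronglyMeasurable measurableSet_Icc⟩
        ((hf t ⟨ht.1.le, ht.2.le⟩).continuousAt hmemIcc)
    have h1' : HasDerivAt (fun s : ℝ => (s - a) ^ (p+1)) ((p+1) * (t-a) ^ p) t := by
      have := (Real.hasDerivAt_rpow_const (x := t - a) (p := p+1) (Or.inl h1.ne')).comp t
        ((hasDerivAt_id t).sub_const a)
      simpa [add_sub_cancel_right, Function.comp_def] using this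
    have h2' : HasDerivAt (fun s => F s ^ (-p)) (f t * (-p) * F t ^ (-p-1)) t :=
      hFderiv.rpow_const (Or.inl hFt.ne')
    have hGH : G =ᶠ[𝓝 t] fun s => (s - a) ^ (p+1) * F s ^ (-p) := by
      filter_upwards [isOpen_Ioo.mem_nhds ht] with s hs
      exact hGA s ⟨hs.1, hs.2.le⟩
    have hder := (h1'.mul h2').congr_of_eventuallyEq hGH
    have eA1 : A t ^ (-p) = (t-a) ^ p * F t ^ (-p) := by
      rw [hAeq t ht.1.ne', rpow_aux h1 hFt.le, neg_neg]
    have eA2 : A t ^ (-p-1) = (t-a) ^ (p+1) * F t ^ (-p-1) := by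
      rw [hAeq t ht.1.ne', rpow_aux h1 hFt.le, show -(-p-1) = p+1 by ring]
    refine hder.congr_deriv ?_
    simp only [hg']
    rw [eA1, eA2]; ring
  have hrpowA : ∀ e : ℝ, ContinuousOn (fun t => A t ^ e) (Icc a b) :=
    fun e => hAcont.rpow_const fun t ht => Or.inl (hApos t ht).ne'
  have hGcont : ContinuousOn G (Icc a b) :=
    ((continuous_id.sub continuous_const).continuousOn).mul (hrpowA (-p))
  have hg'cont : ContinuousOn g' (Icc a b) :=
    (continuousOn_const.mul (hrpowA (-p))).sub
      (continuousOn_const.mul ((hrpowA (-p-1)).mul hf))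
  have hIcc : Icc a b = uIcc a b := (uIcc_of_le hab.le).symm
  have hg'int : IntervalIntegrable g' volume a b := by
    apply ContinuousOn.intervalIntegrable; rw [← hIcc]; exact hg'cont
  have hFTC : ∫ t in a..b, g' t = (b - a) * ℓ ^ (-p) := by
    rw [integral_eq_sub_of_hasDeriv_right_of_le hab.le hGcont
      (fun t ht => (hGderiv t ht).hasDerivWithinAt) hg'int]
    simp only [hG]
    rw [hAb, sub_self, zero_mul, sub_zero]
  -- the three integrals
  set I1 : ℝ := ∫ t in a..b, A t ^ (-p) with hI1
  set I2 : ℝ := ∫ t in a..b, A t ^ (-p-1) * f t with hI2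
  set I3 : ℝ := ∫ t in a..b, A t ^ (-p+q) * f t ^ (-q) with hI3
  have hint1 : IntervalIntegrable (fun t => A t ^ (-p)) volume a b := by
    apply ContinuousOn.intervalIntegrable; rw [← hIcc]; exact hrpowA (-p)
  have hint2 : IntervalIntegrable (fun t => A t ^ (-p-1) * f t) volume a b := by
    apply ContinuousOn.intervalIntegrable; rw [← hIcc]; exact (hrpowA (-p-1)).mul hf
  have hint3 : IntervalIntegrable (fun t => A t ^ (-p+q) * f t ^ (-q)) volume a b := by
    apply ContinuousOn.intervalIntegrable; rw [← hIcc]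
    exact (hrpowA (-p+q)).mul (hf.rpow_const fun t ht => Or.inl (hfpos t ht).ne')
  -- the identity from FTC
  have hid : (p+1) * I1 - p * I2 = (b - a) * ℓ ^ (-p) := by
    rw [← hFTC, hI1, hI2, ← intervalIntegral.integral_const_mul,
      ← intervalIntegral.integral_const_mul, ← intervalIntegral.integral_sub
        (hint1.const_mul _) (hint2.const_mul _)]
  -- the inequality from the pointwise bound
  have hineq : (q+1) * I1 - q * (p/(p+1) * I2) ≤ ((p+1)/p) ^ q * I3 := by
    rw [hI1, hI2, hI3, ← intervalIntegral.integral_const_mul,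
      ← intervalIntegral.integral_const_mul, ← intervalIntegral.integral_const_mul,
      ← intervalIntegral.integral_const_mul,
      ← intervalIntegral.integral_sub (hint1.const_mul _)
        ((hint2.const_mul _).const_mul _)]
    apply intervalIntegral.integral_mono_on hab.le
      (((hint1.const_mul _).sub ((hint2.const_mul _).const_mul _))) (hint3.const_mul _)
    intro x hx
    exact key_ineq_s9 hp hq (hApos x hx) (hfpos x hx)
  -- replace the integrands
  have e1 : (∫ t in a..b, ((t - a)⁻¹ * ∫ u in a..t, f u) ^ (-p)) = I1 := by
    rw [hI1]
    apply intervalIntegral.integral_congr_ae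
    filter_upwards with x hx
    rw [uIoc_of_le hab.le] at hx
    rw [hAeq x hx.1.ne', hF]
  have e3 : (∫ t in a..b, ((t - a)⁻¹ * ∫ u in a..t, f u) ^ (-p + q) * (f t) ^ (-q)) = I3 := by
    rw [hI3]
    apply intervalIntegral.integral_congr_ae
    filter_upwards with x hx
    rw [uIoc_of_le hab.le] at hx
    rw [hAeq x hx.1.ne', hF]
  rw [e1, e3]
  have hpI2 : p * I2 = (p+1) * I1 - (b - a) * ℓ ^ (-p) := by linarith
  have hq1 : q * (p/(p+1) * I2) = q * I1 - q/(p+1) * ((b - a) * ℓ ^ (-p)) := by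
    have h5 : q * (p/(p+1) * I2) = q/(p+1) * (p * I2) := by field_simp
    rw [h5, hpI2]
    field_simp
  rw [hq1] at hineq
  nlinarith [hineq]
end

section
/- Fix p ≥ q > 0 and ℓ > 0. For a ∈ (−1/p, 0) define L_a = ∫_0^1 ((1/t)∫_0^t g_a)^(−p) dt − ((p+1)/p)^q · ∫_0^1 ((1/t)∫_0^t g_a)^(−p+q)·g_a(t)^(−q) dt, where g_a(t) = ℓ(1−a)t^(−a). Then L_a = ℓ^(−p)·(1 − (1−a)^(−q)·((p+1)/p)^q)/(1+ap), and lim_{a→(−1/p)⁺} L_a = −(q/(p+1))·ℓ^(−p). -/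
open Filter Set intervalIntegral

theorem stmt13 (p q ℓ : ℝ) (hq : 0 < q) (hpq : q ≤ p) (hℓ : 0 < ℓ)
    (L : ℝ → ℝ)
    (hLdef : ∀ a ∈ Set.Ioo (-1 / p) 0,
      L a = (∫ t in (0:ℝ)..1, (t⁻¹ * ∫ u in (0:ℝ)..t, ℓ * (1 - a) * u ^ (-a)) ^ (-p))
        - ((p + 1) / p) ^ q *
            ∫ t in (0:ℝ)..1, (t⁻¹ * ∫ u in (0:ℝ)..t, ℓ * (1 - a) * u ^ (-a)) ^ (-p + q)
              * (ℓ * (1 - a) * t ^ (-a)) ^ (-q)) :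
    (∀ a ∈ Set.Ioo (-1 / p) 0,
      L a = ℓ ^ (-p) * (1 - (1 - a) ^ (-q) * ((p + 1) / p) ^ q) / (1 + a * p)) ∧
    Filter.Tendsto L (nhdsWithin (-1 / p) (Set.Ioi (-1 / p)))
      (nhds (-(q / (p + 1)) * ℓ ^ (-p))) := by
  have hp : 0 < p := lt_of_lt_of_le hq hpq
  set c : ℝ := (p + 1) / p with hc
  have hcpos : 0 < c := by rw [hc]; positivity
  clear_value c
  -- Part 1
  have key : ∀ a ∈ Set.Ioo (-1 / p) 0,
      L a = ℓ ^ (-p) * (1 - (1 - a) ^ (-q) * c ^ q) / (1 + a * p) := by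
    intro a ha
    obtain ⟨ha1, ha2⟩ := ha
    have hap : -1 < a * p := by
      have := (div_lt_iff₀ hp).mp ha1
      linarith
    have hma : 0 < 1 - a := by linarith
    have hden : 0 < 1 + a * p := by linarith
    have hden' : a * p + 1 ≠ 0 := by linarith
    have hinner : ∀ t : ℝ, 0 ≤ t →
        (∫ u in (0:ℝ)..t, ℓ * (1 - a) * u ^ (-a)) = ℓ * t ^ (1 - a) := by
      intro t ht
      rw [intervalIntegral.integral_const_mul, integral_rpow (Or.inl (by linarith)),
        Real.zero_rpow (by linarith), show -a + 1 = 1 - a by ring, sub_zero]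
      field_simp
    have e1 : Set.EqOn
        (fun t : ℝ => (t⁻¹ * ∫ u in (0:ℝ)..t, ℓ * (1 - a) * u ^ (-a)) ^ (-p))
        (fun t : ℝ => ℓ ^ (-p) * t ^ (a * p)) (Set.uIcc 0 1) := by
      intro t ht
      rw [Set.uIcc_of_le zero_le_one] at ht
      rcases eq_or_lt_of_le ht.1 with h0 | h0
      · simp only [← h0, inv_zero, zero_mul, Real.zero_rpow (by nlinarith : a * p ≠ 0),
          Real.zero_rpow (by linarith : -p ≠ 0), mul_zero]
      · have hts : t ^ ((1:ℝ) - a) = t * t ^ (-a) := by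
          rw [show (1:ℝ) - a = 1 + (-a) by ring, Real.rpow_add h0, Real.rpow_one]
        have ht' : t⁻¹ * (ℓ * (t * t ^ (-a))) = ℓ * t ^ (-a) := by
          field_simp
        simp only
        rw [hinner t h0.le, hts, ht',
          Real.mul_rpow hℓ.le (Real.rpow_nonneg h0.le _),
          ← Real.rpow_mul h0.le, show -a * -p = a * p by ring]
    have e2 : Set.EqOn
        (fun t : ℝ => (t⁻¹ * ∫ u in (0:ℝ)..t, ℓ * (1 - a) * u ^ (-a)) ^ (-p + q)
            * (ℓ * (1 - a) * t ^ (-a)) ^ (-q))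
        (fun t : ℝ => ℓ ^ (-p) * (1 - a) ^ (-q) * t ^ (a * p)) (Set.uIcc 0 1) := by
      intro t ht
      rw [Set.uIcc_of_le zero_le_one] at ht
      rcases eq_or_lt_of_le ht.1 with h0 | h0
      · simp only [← h0, Real.zero_rpow (by linarith : -a ≠ 0), mul_zero,
          Real.zero_rpow (by nlinarith : a * p ≠ 0),
          Real.zero_rpow (by linarith : -q ≠ 0)]
      · have hts : t ^ ((1:ℝ) - a) = t * t ^ (-a) := by
          rw [show (1:ℝ) - a = 1 + (-a) by ring, Real.rpow_add h0, Real.rpow_one]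
        have ht' : t⁻¹ * (ℓ * (t * t ^ (-a))) = ℓ * t ^ (-a) := by
          field_simp
        simp only
        rw [hinner t h0.le, hts, ht',
          Real.mul_rpow hℓ.le (Real.rpow_nonneg h0.le _),
          Real.mul_rpow (by positivity : (0:ℝ) ≤ ℓ * (1 - a)) (Real.rpow_nonneg h0.le _),
          Real.mul_rpow hℓ.le hma.le,
          ← Real.rpow_mul h0.le, ← Real.rpow_mul h0.le]
        have hℓc : ℓ ^ (-p + q) * (ℓ ^ (-q) * (1 - a) ^ (-q)) = ℓ ^ (-p) * (1 - a) ^ (-q) := by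
          rw [← mul_assoc, ← Real.rpow_add hℓ]
          norm_num
        have htc : t ^ (-a * (-p + q)) * t ^ (-a * -q) = t ^ (a * p) := by
          rw [← Real.rpow_add h0]
          ring_nf
        calc ℓ ^ (-p + q) * t ^ (-a * (-p + q)) * (ℓ ^ (-q) * (1 - a) ^ (-q) * t ^ (-a * -q))
            = (ℓ ^ (-p + q) * (ℓ ^ (-q) * (1 - a) ^ (-q))) * (t ^ (-a * (-p + q)) * t ^ (-a * -q)) := by
              ring
          _ = ℓ ^ (-p) * (1 - a) ^ (-q) * t ^ (a * p) := by rw [hℓc, htc]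
    have base : (∫ t in (0:ℝ)..1, t ^ (a * p)) = 1 / (a * p + 1) := by
      rw [integral_rpow (Or.inl hap), Real.one_rpow, Real.zero_rpow (by linarith)]
      norm_num
    have I1 : (∫ t in (0:ℝ)..1, (t⁻¹ * ∫ u in (0:ℝ)..t, ℓ * (1 - a) * u ^ (-a)) ^ (-p))
        = ℓ ^ (-p) * (1 / (a * p + 1)) := by
      rw [intervalIntegral.integral_congr e1, intervalIntegral.integral_const_mul, base]
    have I2 : (∫ t in (0:ℝ)..1, (t⁻¹ * ∫ u in (0:ℝ)..t, ℓ * (1 - a) * u ^ (-a)) ^ (-p + q)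
          * (ℓ * (1 - a) * t ^ (-a)) ^ (-q))
        = ℓ ^ (-p) * (1 - a) ^ (-q) * (1 / (a * p + 1)) := by
      rw [intervalIntegral.integral_congr e2, intervalIntegral.integral_const_mul, base]
    rw [hLdef a ⟨ha1, ha2⟩, I1, I2]
    field_simp [hden.ne', hden']
    ring
  refine ⟨key, ?_⟩
  -- Part 2
  set x : ℝ := -1 / p with hx
  have hx0 : x < 0 := by
    rw [hx]; exact div_neg_of_neg_of_pos (by norm_num) hp
  have hx1 : 1 - x = c := by rw [hx, hc]; field_simp; ring
  set h : ℝ → ℝ := fun a => 1 - (1 - a) ^ (-q) * c ^ q with hh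
  have hdsub : HasDerivAt (fun a : ℝ => 1 - a) (-1) x := (hasDerivAt_id x).const_sub 1
  have hrpow : HasDerivAt (fun y : ℝ => y ^ (-q)) (-q * (1 - x) ^ (-q - 1)) (1 - x) :=
    Real.hasDerivAt_rpow_const (Or.inl (by rw [hx1]; exact hcpos.ne'))
  have hcomp : HasDerivAt (fun a : ℝ => (1 - a) ^ (-q)) (-q * (1 - x) ^ (-q - 1) * (-1)) x :=
    hrpow.comp x hdsub
  have hd : HasDerivAt h (-(q * p / (p + 1))) x := by
    have hder := (hcomp.mul_const (c ^ q)).const_sub 1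
    convert hder using 1
    case e'_4 => rfl
    case e'_5 => rfl
    rw [hx1, mul_comm (-q * c ^ (-q - 1) * -1) (c ^ q)]
    rw [show c ^ q * (-q * c ^ (-q - 1) * -1) = q * (c ^ (-q - 1) * c ^ q) by ring,
      ← Real.rpow_add hcpos, show -q - 1 + q = -1 by ring, Real.rpow_neg_one, hc]
    field_simp
  have hhx : h x = 0 := by
    simp only [hh, hx1, ← Real.rpow_add hcpos]
    norm_num
  have hslope : Tendsto (slope h x) (nhdsWithin x (Set.Ioi x)) (nhds (-(q * p / (p + 1)))) :=
    (hasDerivAt_iff_tendsto_slope.mp hd).mono_left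
      (nhdsWithin_mono _ (fun y hy => ne_of_gt hy))
  have lim : Tendsto (fun a => ℓ ^ (-p) * (1 - (1 - a) ^ (-q) * c ^ q) / (1 + a * p))
      (nhdsWithin x (Set.Ioi x)) (nhds (-(q / (p + 1)) * ℓ ^ (-p))) := by
    have h2 : Tendsto (fun a => ℓ ^ (-p) / p * slope h x a) (nhdsWithin x (Set.Ioi x))
        (nhds (ℓ ^ (-p) / p * (-(q * p / (p + 1))))) := hslope.const_mul _
    have heq : (fun a => ℓ ^ (-p) / p * slope h x a) =ᶠ[nhdsWithin x (Set.Ioi x)]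
        (fun a => ℓ ^ (-p) * (1 - (1 - a) ^ (-q) * c ^ q) / (1 + a * p)) := by
      filter_upwards [self_mem_nhdsWithin] with a haI
      have hax : a - x ≠ 0 := sub_ne_zero.mpr (ne_of_gt haI)
      have hden2 : 1 + a * p = p * (a - x) := by rw [hx]; field_simp; ring
      rw [slope_def_field, hhx, sub_zero, hden2]
      simp only [hh]
      field_simp
    have hval : ℓ ^ (-p) / p * (-(q * p / (p + 1))) = -(q / (p + 1)) * ℓ ^ (-p) := by
      field_simp
    exact hval ▸ h2.congr' heq
  refine lim.congr' ?_
  filter_upwards [Ioo_mem_nhdsGT_of_mem (Set.left_mem_Ico.mpr hx0)] with a ha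
  exact (key a ha).symm
end
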